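/- Let 0<q<1, a ∈ ℂ, and y ∈ ℂ with |y| < 1. With κ_s = Σ_{p=0}^{s} (−a·q^s)^p · q^{−p(p−1)/2}/(q;q)_p, both of the following series converge absolutely and are equal: Σ_{s=0}^{∞} κ_s·y^s = Σ_{s=0}^{∞} (a·q^{s+1}·y; q)_∞ · y^s, where (a q^{s+1} y;q)_∞ = Π_{j=0}^{∞}(1 − a y q^{s+1+j}). (Closed form of the inversion kernel K(a;y) from the matter-brane basis to the chord-number basis.) -/

import Mathlib

/-- The q-Pochhammer symbol `(q;q)_n = Π_{j=0}^{n−1}(1 − q^{j+1})` (as a complex number). -/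
noncomputable def qPochQC (q : ℝ) (n : ℕ) : ℂ := ∏ j ∈ Finset.range n, (1 - (q : ℂ) ^ (j + 1))

/-- The infinite q-Pochhammer symbol `(x;q)_∞ = Π_{j=0}^{∞}(1 − x qʲ)`. -/
noncomputable def qPochInfC (q : ℝ) (x : ℂ) : ℂ := ∏' j : ℕ, (1 - x * (q : ℂ) ^ j)

/-- The inversion-kernel coefficients
`κ_s = Σ_{p=0}^{s} (−a·q^s)^p · q^{−p(p−1)/2} / (q;q)_p`. -/
noncomputable def kappa (q : ℝ) (a : ℂ) (s : ℕ) : ℂ :=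
  ∑ p ∈ Finset.range (s + 1),
    (-(a * (q : ℂ) ^ s)) ^ p / ((q : ℂ) ^ (p * (p - 1) / 2) * qPochQC q p)

namespace Stmt15

open Finset Filter Complex Topology

/-! ### Natural-number triangle identities -/

lemma tri_sum (n : ℕ) : n * (n - 1) / 2 = ∑ i ∈ Finset.range n, i := by
  rw [← Finset.sum_range_id_mul_two n, Nat.mul_div_cancel _ zero_lt_two]

lemma tri_succ (p : ℕ) : (p + 1) * ((p + 1) - 1) / 2 = p * (p - 1) / 2 + p := by
  rw [tri_sum, tri_sum, Finset.sum_range_succ]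

lemma e_eq (p : ℕ) : p * (p + 1) / 2 = p * (p - 1) / 2 + p := by
  rw [mul_comm p (p+1)]; exact tri_succ p

lemma exp_split (p t : ℕ) :
    (p + t) * p = p * (p - 1) / 2 + (p * (p + 1) / 2 + p * t) := by
  have h2 : p * (p - 1) / 2 * 2 = p * (p - 1) := by
    rw [tri_sum, Finset.sum_range_id_mul_two]
  have h3 : p * (p - 1) + p = p * p := by
    cases p with
    | zero => rfl
    | succ n => simp [Nat.succ_sub_one]; ring
  rw [e_eq]
  calc (p + t) * p = p * p + p * t := by ring
    _ = (p * (p - 1) + p) + p * t := by rw [h3]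
    _ = (p * (p - 1) / 2 * 2 + p) + p * t := by rw [h2]
    _ = p * (p - 1) / 2 + (p * (p - 1) / 2 + p + p * t) := by ring

lemma exp_split' (p s : ℕ) :
    (s + 1) * p + p * (p - 1) / 2 = p * (p + 1) / 2 + p * s := by
  rw [e_eq]
  have : (s + 1) * p = p * s + p := by ring
  omega

/-! ### q-Pochhammer basics -/

variable {q : ℝ}

lemma qPochQC_eq_real (n : ℕ) :
    qPochQC q n = ((∏ j ∈ Finset.range n, (1 - q ^ (j + 1)) : ℝ) : ℂ) := by
  rw [qPochQC]
  push_cast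
  rfl

lemma qfactor_pos (hq0 : 0 < q) (hq1 : q < 1) (j : ℕ) : 1 - q ≤ 1 - q ^ (j + 1) := by
  have : q ^ (j + 1) ≤ q ^ 1 := pow_le_pow_of_le_one hq0.le hq1.le (by omega)
  rw [pow_one] at this
  linarith

lemma qPochR_pos (hq0 : 0 < q) (hq1 : q < 1) (n : ℕ) :
    0 < ∏ j ∈ Finset.range n, (1 - q ^ (j + 1)) :=
  Finset.prod_pos fun j _ => lt_of_lt_of_le (by linarith) (qfactor_pos hq0 hq1 j)

lemma qPochR_ge (hq0 : 0 < q) (hq1 : q < 1) (n : ℕ) :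
    (1 - q) ^ n ≤ ∏ j ∈ Finset.range n, (1 - q ^ (j + 1)) := by
  calc (1 - q) ^ n = ∏ _j ∈ Finset.range n, (1 - q) := by
        rw [Finset.prod_const, Finset.card_range]
    _ ≤ _ := Finset.prod_le_prod (fun j _ => by linarith) (fun j _ => qfactor_pos hq0 hq1 j)

lemma norm_qPochQC (hq0 : 0 < q) (hq1 : q < 1) (n : ℕ) :
    ‖qPochQC q n‖ = ∏ j ∈ Finset.range n, (1 - q ^ (j + 1)) := by
  rw [qPochQC_eq_real, Complex.norm_real, Real.norm_eq_abs,
    abs_of_pos (qPochR_pos hq0 hq1 n)]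

lemma qPochQC_ne_zero (hq0 : 0 < q) (hq1 : q < 1) (n : ℕ) : qPochQC q n ≠ 0 := by
  intro h
  have := norm_qPochQC hq0 hq1 n
  rw [h, norm_zero] at this
  exact absurd this.symm (ne_of_gt (qPochR_pos hq0 hq1 n))

lemma one_sub_cpow_ne (hq0 : 0 < q) (hq1 : q < 1) (n : ℕ) :
    (1 : ℂ) - (q : ℂ) ^ (n + 1) ≠ 0 := by
  have h : ((1 - q ^ (n + 1) : ℝ) : ℂ) ≠ 0 := by
    have : 0 < 1 - q ^ (n + 1) := lt_of_lt_of_le (by linarith) (qfactor_pos hq0 hq1 n)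
    exact_mod_cast ne_of_gt this
  simpa using h

/-! ### A generic summability lemma -/

lemma summable_geom_tri (hq0 : 0 < q) (hq1 : q < 1) (R : ℝ) (hR : 0 ≤ R)
    (e : ℕ → ℕ) (he : ∀ p, e p + p ≤ e (p + 1)) :
    Summable fun p : ℕ => R ^ p * q ^ e p := by
  apply summable_of_ratio_norm_eventually_le (r := 1/2) (by norm_num)
  have h0 : Filter.Tendsto (fun p : ℕ => R * q ^ p) atTop (nhds 0) := by
    simpa using (tendsto_pow_atTop_nhds_zero_of_lt_one hq0.le hq1).const_mul R
  filter_upwards [h0.eventually_lt_const (by norm_num : (0:ℝ) < 1/2)] with p hp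
  have hq0p : (0:ℝ) ≤ q := hq0.le
  rw [Real.norm_eq_abs, Real.norm_eq_abs]
  rw [_root_.abs_of_nonneg (by positivity : (0:ℝ) ≤ R ^ (p+1) * q ^ e (p+1)),
    _root_.abs_of_nonneg (by positivity : (0:ℝ) ≤ R ^ p * q ^ e p)]
  calc R ^ (p + 1) * q ^ e (p + 1)
      ≤ R ^ (p + 1) * q ^ (e p + p) := by
        apply mul_le_mul_of_nonneg_left _ (by positivity)
        exact pow_le_pow_of_le_one hq0.le hq1.le (he p)
    _ = (R * q ^ p) * (R ^ p * q ^ e p) := by ring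
    _ ≤ (1/2) * (R ^ p * q ^ e p) :=
        mul_le_mul_of_nonneg_right hp.le (by positivity)

/-! ### Euler's identity for `(x;q)_∞` -/

/-- Term of Euler's series. -/
noncomputable def eterm (q : ℝ) (x : ℂ) (p : ℕ) : ℂ :=
  (-x) ^ p * (q : ℂ) ^ (p * (p - 1) / 2) / qPochQC q p

lemma eterm_zero (x : ℂ) : eterm q x 0 = 1 := by
  simp [eterm, qPochQC]

lemma norm_eterm_le (hq0 : 0 < q) (hq1 : q < 1) (x : ℂ) (p : ℕ) :
    ‖eterm q x p‖ ≤ (‖x‖ / (1 - q)) ^ p * q ^ (p * (p - 1) / 2) := by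
  have h1q : (0:ℝ) < 1 - q := by linarith
  rw [eterm, norm_div, norm_mul, norm_pow, norm_pow, norm_neg,
    Complex.norm_real, Real.norm_eq_abs, _root_.abs_of_nonneg hq0.le,
    norm_qPochQC hq0 hq1]
  rw [div_pow, div_mul_eq_mul_div, div_le_div_iff₀ (qPochR_pos hq0 hq1 p) (by positivity)]
  calc ‖x‖ ^ p * q ^ (p * (p-1)/2) * (1-q)^p
      ≤ ‖x‖ ^ p * q ^ (p * (p-1)/2) * ∏ j ∈ Finset.range p, (1 - q ^ (j+1)) := by
        apply mul_le_mul_of_nonneg_left (qPochR_ge hq0 hq1 p) (by positivity)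

lemma summable_norm_eterm (hq0 : 0 < q) (hq1 : q < 1) (x : ℂ) :
    Summable fun p => ‖eterm q x p‖ := by
  have h1q : (0:ℝ) < 1 - q := by linarith
  apply Summable.of_nonneg_of_le (fun p => norm_nonneg _) (norm_eterm_le hq0 hq1 x)
  exact summable_geom_tri hq0 hq1 _ (by positivity) _ (fun p => (tri_succ p).ge)

lemma summable_eterm (hq0 : 0 < q) (hq1 : q < 1) (x : ℂ) : Summable (eterm q x) :=
  (summable_norm_eterm hq0 hq1 x).of_norm

/-- The sum of Euler's series. -/
noncomputable def eul (q : ℝ) (x : ℂ) : ℂ := ∑' p, eterm q x p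

/-- shifted terms -/
noncomputable def sterm (q : ℝ) (x : ℂ) : ℕ → ℂ
  | 0 => 0
  | n + 1 => eterm q ((q : ℂ) * x) n

lemma eterm_rec (hq0 : 0 < q) (hq1 : q < 1) (x : ℂ) (p : ℕ) :
    eterm q x p = eterm q ((q : ℂ) * x) p - x * sterm q x p := by
  cases p with
  | zero => simp [sterm, eterm_zero]
  | succ n =>
    have hP : qPochQC q (n + 1) = qPochQC q n * (1 - (q:ℂ) ^ (n + 1)) := by
      rw [qPochQC, qPochQC, Finset.prod_range_succ]
    have hT : (n+1) * ((n+1) - 1) / 2 = n * (n-1) / 2 + n := tri_succ n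
    have hPn : qPochQC q n ≠ 0 := qPochQC_ne_zero hq0 hq1 n
    have h1 : (1:ℂ) - (q:ℂ) ^ (n+1) ≠ 0 := one_sub_cpow_ne hq0 hq1 n
    simp only [eterm, sterm, hT, hP, pow_add (q:ℂ) (n*(n-1)/2) n]
    field_simp
    ring
  
lemma eul_rec (hq0 : 0 < q) (hq1 : q < 1) (x : ℂ) :
    eul q x = (1 - x) * eul q ((q : ℂ) * x) := by
  have hS : HasSum (eterm q ((q:ℂ) * x)) (eul q ((q:ℂ) * x)) :=
    (summable_eterm hq0 hq1 _).hasSum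
  have hshift : HasSum (sterm q x) (eul q ((q:ℂ) * x)) := by
    have h1 : (fun n => sterm q x (n + 1)) = eterm q ((q:ℂ) * x) := by
      funext n; rfl
    have h2 : HasSum (fun n => sterm q x (n + 1)) (eul q ((q:ℂ) * x)) := by
      rw [h1]; exact hS
    have h3 := (hasSum_nat_add_iff (f := sterm q x) 1).mp h2
    simpa [sterm] using h3
  have hsum : HasSum (fun p => eterm q ((q:ℂ) * x) p - x * sterm q x p)
      (eul q ((q:ℂ) * x) - x * eul q ((q:ℂ) * x)) := hS.sub (hshift.mul_left x)
  have heq : (fun p => eterm q ((q:ℂ) * x) p - x * sterm q x p) = eterm q x := by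
    funext p; exact (eterm_rec hq0 hq1 x p).symm
  rw [heq] at hsum
  rw [eul, hsum.tsum_eq]
  ring

lemma eul_iter (hq0 : 0 < q) (hq1 : q < 1) (x : ℂ) (n : ℕ) :
    eul q x = (∏ j ∈ Finset.range n, (1 - x * (q:ℂ) ^ j)) * eul q ((q:ℂ) ^ n * x) := by
  induction n with
  | zero => simp
  | succ n ih =>
    rw [ih, eul_rec hq0 hq1 ((q:ℂ) ^ n * x), Finset.prod_range_succ]
    rw [show (q:ℂ) * ((q:ℂ) ^ n * x) = (q:ℂ) ^ (n+1) * x by ring]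
    ring

lemma w_def (hq0 : 0 < q) (hq1 : q < 1) (x : ℂ) :
    Summable fun p : ℕ => (‖x‖ / (1 - q)) ^ p * q ^ (p * (p - 1) / 2) := by
  have h1q : (0:ℝ) < 1 - q := by linarith
  exact summable_geom_tri hq0 hq1 _ (by positivity) _ (fun p => (tri_succ p).ge)

lemma tendsto_eul_one (hq0 : 0 < q) (hq1 : q < 1) (x : ℂ) :
    Filter.Tendsto (fun n => eul q ((q:ℂ) ^ n * x)) atTop (nhds 1) := by
  have h1q : (0:ℝ) < 1 - q := by linarith
  have hwsum' : Summable (fun p : ℕ =>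
      (‖x‖ / (1 - q)) ^ (p + 1) * q ^ ((p + 1) * ((p + 1) - 1) / 2)) :=
    (summable_nat_add_iff (f := fun p : ℕ => (‖x‖ / (1 - q)) ^ p * q ^ (p * (p - 1) / 2)) 1).mpr
      (w_def hq0 hq1 x)
  have hbound : ∀ n : ℕ, ‖eul q ((q:ℂ) ^ n * x) - 1‖ ≤
      q ^ n * ∑' p : ℕ, (‖x‖ / (1 - q)) ^ (p + 1) * q ^ ((p + 1) * ((p + 1) - 1) / 2) := by
    intro n
    have hsum := summable_eterm hq0 hq1 ((q:ℂ) ^ n * x)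
    have h0 : eul q ((q:ℂ) ^ n * x)
        = eterm q ((q:ℂ) ^ n * x) 0 + ∑' p, eterm q ((q:ℂ) ^ n * x) (p + 1) :=
      hsum.tsum_eq_zero_add
    rw [eterm_zero] at h0
    have h0' : eul q ((q:ℂ) ^ n * x) - 1 = ∑' p, eterm q ((q:ℂ) ^ n * x) (p + 1) := by
      rw [h0]; ring
    rw [h0']
    have hsn : Summable fun p => ‖eterm q ((q:ℂ) ^ n * x) (p + 1)‖ :=
      (summable_nat_add_iff (f := fun p => ‖eterm q ((q:ℂ) ^ n * x) p‖) 1).mpr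
        (summable_norm_eterm hq0 hq1 _)
    have hzn : ‖(q:ℂ) ^ n * x‖ = q ^ n * ‖x‖ := by
      rw [norm_mul, norm_pow, Complex.norm_real, Real.norm_eq_abs,
        _root_.abs_of_nonneg hq0.le]
    have hterm : ∀ p : ℕ, ‖eterm q ((q:ℂ) ^ n * x) (p + 1)‖ ≤
        q ^ n * ((‖x‖ / (1 - q)) ^ (p + 1) * q ^ ((p + 1) * ((p + 1) - 1) / 2)) := by
      intro p
      refine le_trans (norm_eterm_le hq0 hq1 _ (p + 1)) ?_
      have he1 : (‖(q:ℂ) ^ n * x‖ / (1 - q)) ^ (p+1)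
          = (q^n)^(p+1) * (‖x‖ / (1-q))^(p+1) := by rw [hzn]; ring
      rw [he1]
      have h1 : (q^n)^(p+1) ≤ q^n := by
        have hle1 : q ^ n ≤ 1 := by
          simpa using pow_le_pow_of_le_one hq0.le hq1.le (Nat.zero_le n)
        have := pow_le_pow_of_le_one (pow_nonneg hq0.le n) hle1
          (show 1 ≤ p + 1 by omega)
        simpa using this
      have h2 : (0:ℝ) ≤ (‖x‖ / (1-q))^(p+1) * q ^ ((p+1) * ((p+1) - 1) / 2) := by
        positivity
      calc (q^n)^(p+1) * (‖x‖ / (1-q))^(p+1) * q ^ ((p+1) * ((p+1) - 1) / 2)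
          = (q^n)^(p+1) * ((‖x‖ / (1-q))^(p+1) * q ^ ((p+1) * ((p+1) - 1) / 2)) := by ring
        _ ≤ q^n * ((‖x‖ / (1-q))^(p+1) * q ^ ((p+1) * ((p+1) - 1) / 2)) :=
            mul_le_mul_of_nonneg_right h1 h2
    calc ‖∑' p, eterm q ((q:ℂ) ^ n * x) (p + 1)‖
        ≤ ∑' p, ‖eterm q ((q:ℂ) ^ n * x) (p + 1)‖ := norm_tsum_le_tsum_norm hsn
      _ ≤ ∑' p : ℕ, q ^ n * ((‖x‖ / (1 - q)) ^ (p + 1)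
            * q ^ ((p + 1) * ((p + 1) - 1) / 2)) :=
          Summable.tsum_le_tsum hterm hsn (hwsum'.mul_left _)
      _ = q ^ n * ∑' p : ℕ, (‖x‖ / (1 - q)) ^ (p + 1)
            * q ^ ((p + 1) * ((p + 1) - 1) / 2) := tsum_mul_left
  have htend0 : Filter.Tendsto (fun n => ‖eul q ((q:ℂ) ^ n * x) - 1‖) atTop (nhds 0) := by
    apply squeeze_zero (fun n => norm_nonneg _) hbound
    simpa using (tendsto_pow_atTop_nhds_zero_of_lt_one hq0.le hq1).mul_const _
  exact tendsto_iff_norm_sub_tendsto_zero.mpr htend0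

lemma tendsto_partial_prod (hq0 : 0 < q) (hq1 : q < 1) (x : ℂ) :
    Filter.Tendsto (fun n => ∏ j ∈ Finset.range n, (1 - x * (q:ℂ) ^ j)) atTop
      (nhds (qPochInfC q x)) := by
  by_cases hzero : ∃ j0 : ℕ, 1 - x * (q:ℂ) ^ j0 = 0
  · obtain ⟨j0, hj0⟩ := hzero
    have hProd : HasProd (fun j => 1 - x * (q:ℂ) ^ j) 0 := by
      rw [HasProd]
      apply Filter.Tendsto.congr' _ tendsto_const_nhds
      filter_upwards [Filter.eventually_ge_atTop ({j0} : Finset ℕ)] with S hS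
      exact (Finset.prod_eq_zero (hS (Finset.mem_singleton_self j0)) hj0).symm
    have h0 : qPochInfC q x = 0 := hProd.tprod_eq
    rw [h0]
    apply Filter.Tendsto.congr' _ tendsto_const_nhds
    filter_upwards [Filter.eventually_ge_atTop (j0 + 1)] with n hn
    exact (Finset.prod_eq_zero (Finset.mem_range.mpr (by omega)) hj0).symm
  · push_neg at hzero
    have hlog : Summable fun j : ℕ => Complex.log (1 - x * (q:ℂ) ^ j) := by
      have htend : Filter.Tendsto (fun j : ℕ => ‖x‖ * q ^ j) atTop (nhds 0) := by
        simpa using (tendsto_pow_atTop_nhds_zero_of_lt_one hq0.le hq1).const_mul ‖x‖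
      have hev : ∀ᶠ j in atTop, ‖Complex.log (1 - x * (q:ℂ) ^ j)‖ ≤
          (3/2) * (‖x‖ * q ^ j) := by
        filter_upwards [htend.eventually_le_const (by norm_num : (0:ℝ) < 1/2)] with j hj
        have hnz : ‖-(x * (q:ℂ) ^ j)‖ ≤ 1/2 := by
          rw [norm_neg, norm_mul, norm_pow, Complex.norm_real, Real.norm_eq_abs,
            _root_.abs_of_nonneg hq0.le]
          exact hj
        have := Complex.norm_log_one_add_half_le_self hnz
        rw [show (1:ℂ) + -(x * (q:ℂ) ^ j) = 1 - x * (q:ℂ) ^ j by ring] at this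
        rw [norm_neg, norm_mul, norm_pow, Complex.norm_real, Real.norm_eq_abs,
          _root_.abs_of_nonneg hq0.le] at this
        exact this
      have hgeo : Summable fun j : ℕ => (3/2) * (‖x‖ * q ^ j) :=
        (((summable_geometric_of_lt_one hq0.le hq1).mul_left ‖x‖).mul_left (3/2))
      exact Summable.of_norm_bounded_eventually_nat hgeo hev
    have hm : Multipliable fun j : ℕ => 1 - x * (q:ℂ) ^ j := by
      have := Complex.multipliable_of_summable_log hlog
      exact this
    exact hm.hasProd.tendsto_prod_nat

theorem euler_identity (hq0 : 0 < q) (hq1 : q < 1) (x : ℂ) :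
    qPochInfC q x = eul q x := by
  have h1 : Filter.Tendsto
      (fun n => (∏ j ∈ Finset.range n, (1 - x * (q:ℂ) ^ j)) * eul q ((q:ℂ) ^ n * x))
      atTop (nhds (qPochInfC q x * 1)) :=
    (tendsto_partial_prod hq0 hq1 x).mul (tendsto_eul_one hq0 hq1 x)
  have h2 : Filter.Tendsto
      (fun n => (∏ j ∈ Finset.range n, (1 - x * (q:ℂ) ^ j)) * eul q ((q:ℂ) ^ n * x))
      atTop (nhds (eul q x)) := by
    apply Filter.Tendsto.congr _ tendsto_const_nhds
    intro n
    exact eul_iter hq0 hq1 x n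
  have := tendsto_nhds_unique h2 h1
  rw [this, mul_one]

/-! ### Antidiagonal rearrangement -/

lemma summable_antidiag {E : Type*} [NormedAddCommGroup E] [CompleteSpace E]
    {f : ℕ × ℕ → E} (h : Summable f) :
    Summable fun n => ∑ kl ∈ Finset.HasAntidiagonal.antidiagonal n, f kl := by
  have h' : Summable fun x : Σ n : ℕ, Finset.HasAntidiagonal.antidiagonal n => f x.2 :=
    Finset.HasAntidiagonal.sigmaAntidiagonalEquivProd.summable_iff.mpr h
  conv => congr; ext; rw [← Finset.sum_finset_coe, ← tsum_fintype (L := SummationFilter.unconditional _)]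
  exact h'.sigma' fun n => (hasSum_fintype _).summable

lemma tsum_antidiag {E : Type*} [NormedAddCommGroup E] [CompleteSpace E] [T3Space E]
    {f : ℕ × ℕ → E} (h : Summable f) :
    ∑' n : ℕ, ∑ kl ∈ Finset.HasAntidiagonal.antidiagonal n, f kl = ∑' x : ℕ × ℕ, f x := by
  conv_lhs => congr; ext n; rw [← Finset.sum_finset_coe, ← tsum_fintype (L := SummationFilter.unconditional _)]
  rw [← Finset.HasAntidiagonal.sigmaAntidiagonalEquivProd.tsum_eq f]
  exact (Summable.tsum_sigma' (fun n => (hasSum_fintype _).summable)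
    (Finset.HasAntidiagonal.sigmaAntidiagonalEquivProd.summable_iff.mpr h)).symm

lemma e_succ (p : ℕ) : p * (p + 1) / 2 + p ≤ (p + 1) * ((p + 1) + 1) / 2 := by
  rw [e_eq (p + 1), Nat.add_sub_cancel, mul_comm (p + 1) p]
  omega

/-- The kernel of the double sum. -/
noncomputable def Fker (q : ℝ) (a y : ℂ) (pt : ℕ × ℕ) : ℂ :=
  (-(a * y)) ^ pt.1 * (q : ℂ) ^ (pt.1 * (pt.1 + 1) / 2) / qPochQC q pt.1
    * (y * (q : ℂ) ^ pt.1) ^ pt.2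

end Stmt15

open Stmt15 in
/-- closed form of the inversion kernel: for `|y| < 1` both series
`Σ_s κ_s y^s` and `Σ_s (a q^{s+1} y;q)_∞ y^s` converge absolutely and are equal. -/
theorem stmt_15 (q : ℝ) (hq0 : 0 < q) (hq1 : q < 1) (a y : ℂ)
    (hy : ‖y‖ < 1) :
    Summable (fun s : ℕ => ‖kappa q a s * y ^ s‖) ∧
    Summable (fun s : ℕ =>
      ‖qPochInfC q (a * y * (q : ℂ) ^ (s + 1)) * y ^ s‖) ∧
    ∑' s : ℕ, kappa q a s * y ^ s
      = ∑' s : ℕ, qPochInfC q (a * y * (q : ℂ) ^ (s + 1)) * y ^ s := by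
  have hy' : ‖y‖ < 1 := hy
  have h1y : (0:ℝ) < 1 - ‖y‖ := by linarith
  have h1q : (0:ℝ) < 1 - q := by linarith
  have hc : (q:ℂ) ≠ 0 := by exact_mod_cast hq0.ne'
  -- norm of the kernel
  have hnormF : ∀ p t : ℕ, ‖Fker q a y (p, t)‖ =
      ‖a * y‖ ^ p * q ^ (p * (p + 1) / 2)
        / (∏ j ∈ Finset.range p, (1 - q ^ (j + 1))) * (‖y‖ * q ^ p) ^ t := by
    intro p t
    simp only [Fker, norm_mul, norm_div, norm_pow, norm_neg, Complex.norm_real,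
      Real.norm_eq_abs, _root_.abs_of_nonneg hq0.le, norm_qPochQC hq0 hq1]
  have hrp : ∀ p : ℕ, ‖y‖ * q ^ p < 1 := by
    intro p
    have h1 : q ^ p ≤ 1 := by
      simpa using pow_le_pow_of_le_one hq0.le hq1.le (Nat.zero_le p)
    nlinarith [norm_nonneg y, pow_pos hq0 p]
  have hrp0 : ∀ p : ℕ, (0:ℝ) ≤ ‖y‖ * q ^ p := fun p => by positivity
  -- summability of the double series
  have hS : Summable fun x : ℕ × ℕ => ‖Fker q a y x‖ := by
    apply (summable_prod_of_nonneg (fun _ => norm_nonneg _)).mpr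
    constructor
    · intro p
      apply Summable.congr
        (((summable_geometric_of_lt_one (hrp0 p) (hrp p)).mul_left
          (‖a * y‖ ^ p * q ^ (p * (p + 1) / 2)
            / (∏ j ∈ Finset.range p, (1 - q ^ (j + 1))))))
      intro t
      rw [hnormF p t]
    · have hbsum : Summable fun p : ℕ =>
          (‖a * y‖ / (1 - q)) ^ p * q ^ (p * (p + 1) / 2) * (1 - ‖y‖)⁻¹ :=
        (summable_geom_tri hq0 hq1 _ (by positivity) _ e_succ).mul_right _
      apply Summable.of_nonneg_of_le _ _ hbsum
      · intro p
        exact tsum_nonneg fun t => norm_nonneg _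
      · intro p
        have hPpos := qPochR_pos hq0 hq1 p
        have hcalc : ∑' t, ‖Fker q a y (p, t)‖ =
            ‖a * y‖ ^ p * q ^ (p * (p + 1) / 2)
              / (∏ j ∈ Finset.range p, (1 - q ^ (j + 1))) * (1 - ‖y‖ * q ^ p)⁻¹ := by
          rw [tsum_congr fun t => hnormF p t, tsum_mul_left,
            tsum_geometric_of_lt_one (hrp0 p) (hrp p)]
        rw [hcalc]
        have hle1 : (1 - ‖y‖ * q ^ p)⁻¹ ≤ (1 - ‖y‖)⁻¹ := by
          have h1 : 1 - ‖y‖ ≤ 1 - ‖y‖ * q ^ p := by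
            have h2 : q ^ p ≤ 1 := by
              simpa using pow_le_pow_of_le_one hq0.le hq1.le (Nat.zero_le p)
            nlinarith [norm_nonneg y]
          exact inv_anti₀ h1y h1
        have hle2 : ‖a * y‖ ^ p * q ^ (p * (p + 1) / 2)
              / (∏ j ∈ Finset.range p, (1 - q ^ (j + 1)))
            ≤ (‖a * y‖ / (1 - q)) ^ p * q ^ (p * (p + 1) / 2) := by
          rw [div_pow, div_mul_eq_mul_div, div_le_div_iff₀ hPpos (by positivity)]
          exact mul_le_mul_of_nonneg_left (qPochR_ge hq0 hq1 p) (by positivity)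
        have hc0 : (0:ℝ) ≤ (1 - ‖y‖ * q ^ p)⁻¹ :=
          inv_nonneg.mpr (by nlinarith [hrp p])
        have hb0 : (0:ℝ) ≤ (‖a * y‖ / (1 - q)) ^ p * q ^ (p * (p + 1) / 2) :=
          mul_nonneg (pow_nonneg (div_nonneg (norm_nonneg _) h1q.le) p)
            (pow_nonneg hq0.le _)
        exact mul_le_mul hle2 hle1 hc0 hb0
  have hSF : Summable (Fker q a y) := hS.of_norm
  -- the finite sum identity for κ_s y^s
  have hkeq : ∀ s : ℕ, kappa q a s * y ^ s = ∑ kl ∈ Finset.HasAntidiagonal.antidiagonal s, Fker q a y kl := by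
    intro s
    rw [Finset.Nat.sum_antidiagonal_eq_sum_range_succ_mk, kappa, Finset.sum_mul]
    apply Finset.sum_congr rfl
    intro p hp
    rw [Finset.mem_range] at hp
    obtain ⟨t, rfl⟩ : ∃ t, s = p + t := ⟨s - p, by omega⟩
    have ht : p + t - p = t := by omega
    rw [ht]
    have hPn := qPochQC_ne_zero hq0 hq1 p
    have hq2 : ((q:ℂ)) ^ (p * (p - 1) / 2) ≠ 0 := pow_ne_zero _ hc
    calc (-(a * (q:ℂ) ^ (p + t))) ^ p / ((q:ℂ) ^ (p * (p - 1) / 2) * qPochQC q p)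
          * y ^ (p + t)
        = (-a) ^ p * (q:ℂ) ^ ((p + t) * p)
            / ((q:ℂ) ^ (p * (p - 1) / 2) * qPochQC q p) * y ^ (p + t) := by
          rw [show (-(a * (q:ℂ) ^ (p + t))) = (-a) * (q:ℂ) ^ (p + t) by ring, mul_pow,
            ← pow_mul]
      _ = (-a) ^ p * ((q:ℂ) ^ (p * (p - 1) / 2)
            * ((q:ℂ) ^ (p * (p + 1) / 2) * (q:ℂ) ^ (p * t)))
            / ((q:ℂ) ^ (p * (p - 1) / 2) * qPochQC q p) * y ^ (p + t) := by
          rw [← pow_add, ← pow_add, ← exp_split]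
      _ = Fker q a y (p, t) := by
          simp only [Fker]
          rw [show (-(a * y)) = (-a) * y from by ring, mul_pow, mul_pow, ← pow_mul]
          field_simp
          ring
  -- the tsum identity for the right-hand terms
  have hReq : ∀ s : ℕ, qPochInfC q (a * y * (q:ℂ) ^ (s + 1)) * y ^ s
      = ∑' p : ℕ, Fker q a y (p, s) := by
    intro s
    rw [Stmt15.euler_identity hq0 hq1, Stmt15.eul, ← tsum_mul_right]
    apply tsum_congr
    intro p
    have hPn := qPochQC_ne_zero hq0 hq1 p
    have hexp : (q:ℂ) ^ ((s + 1) * p) * (q:ℂ) ^ (p * (p - 1) / 2)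
        = (q:ℂ) ^ (p * (p + 1) / 2) * (q:ℂ) ^ (p * s) := by
      rw [← pow_add, ← pow_add, exp_split']
    calc eterm q (a * y * (q:ℂ) ^ (s + 1)) p * y ^ s
        = (-(a * y)) ^ p * ((q:ℂ) ^ ((s + 1) * p) * (q:ℂ) ^ (p * (p - 1) / 2))
            / qPochQC q p * y ^ s := by
          rw [eterm, show (-(a * y * (q:ℂ) ^ (s + 1)))
            = (-(a * y)) * (q:ℂ) ^ (s + 1) by ring, mul_pow, ← pow_mul]
          ring
      _ = (-(a * y)) ^ p * ((q:ℂ) ^ (p * (p + 1) / 2) * (q:ℂ) ^ (p * s))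
            / qPochQC q p * y ^ s := by rw [hexp]
      _ = Fker q a y (p, s) := by
          simp only [Fker]
          rw [mul_pow, ← pow_mul]
          ring
  refine ⟨?_, ?_, ?_⟩
  · apply Summable.of_nonneg_of_le (fun s => norm_nonneg _) _ (summable_antidiag hS)
    intro s
    rw [hkeq s]
    exact norm_sum_le _ _
  · have hslice : ∀ s : ℕ, Summable fun p => ‖Fker q a y (p, s)‖ := fun s =>
      hS.prod_symm.prod_factor s
    have hsums : Summable fun s : ℕ => ∑' p : ℕ, ‖Fker q a y (p, s)‖ :=
      ((summable_prod_of_nonneg (fun _ => norm_nonneg _)).mp hS.prod_symm).2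
    apply Summable.of_nonneg_of_le (fun s => norm_nonneg _) _ hsums
    intro s
    rw [hReq s]
    exact norm_tsum_le_tsum_norm (hslice s)
  · calc ∑' s : ℕ, kappa q a s * y ^ s
        = ∑' s : ℕ, ∑ kl ∈ Finset.HasAntidiagonal.antidiagonal s, Fker q a y kl := tsum_congr hkeq
      _ = ∑' x : ℕ × ℕ, Fker q a y x := tsum_antidiag hSF
      _ = ∑' x : ℕ × ℕ, Fker q a y x.swap := ((Equiv.prodComm ℕ ℕ).tsum_eq _).symm
      _ = ∑' s : ℕ, ∑' p : ℕ, Fker q a y (p, s) := Summable.tsum_prod' hSF.prod_symm fun s => hSF.prod_symm.prod_factor s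
      _ = ∑' s : ℕ, qPochInfC q (a * y * (q:ℂ) ^ (s + 1)) * y ^ s :=
          tsum_congr fun s => (hReq s).symm
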